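/- For all positive integers m, n and every BQAP2 instance (q, c, d), the average objective function value over all m^m·n^n feasible solutions equals (1/(m·n))·∑_{i,j,k,l} q i j k l + (1/m)·∑_{i,j} c i j + (1/n)·∑_{i,j} d i j. -/

import Mathlib

lemma sum_fun_eval {α β : Type*} [Fintype α] [DecidableEq α] (i : α) (g : α → β)
    [AddCommMonoid β] :
    ∑ σ : α → α, g (σ i) =
      (Fintype.card α)^(Fintype.card α - 1) • ∑ j, g j := by
  rw [← (Equiv.funSplitAt i α).symm.sum_comp (fun σ => g (σ i))]
  simp [Fintype.sum_prod_type, Finset.sum_const, Fintype.card_fun,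
    Fintype.card_subtype_compl, Finset.sum_comm, ← Finset.sum_nsmul]

lemma sum_sum_eval {α β : Type*} [Fintype α] [DecidableEq α] [AddCommMonoid β]
    (F : α → α → β) :
    ∑ σ : α → α, ∑ i, F i (σ i) =
      (Fintype.card α)^(Fintype.card α - 1) • ∑ i, ∑ j, F i j := by
  rw [Finset.sum_comm, Finset.smul_sum]
  exact Finset.sum_congr rfl fun i _ => sum_fun_eval i (F i)

/-- Objective function of BQAP2: `σ i` is the column of the unique 1 in row `i` of `x`,
`τ l` is the row of the unique 1 in column `l` of `y`. -/
noncomputable def f2 {m n : ℕ} (q : Fin m → Fin m → Fin n → Fin n → ℝ)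
    (c : Fin m → Fin m → ℝ) (d : Fin n → Fin n → ℝ)
    (σ : Fin m → Fin m) (τ : Fin n → Fin n) : ℝ :=
  (∑ i, ∑ l, q i (σ i) (τ l) l) + (∑ i, c i (σ i)) + (∑ l, d (τ l) l)

theorem average_value_BQAP2 (m n : ℕ) (hm : 0 < m) (hn : 0 < n)
    (q : Fin m → Fin m → Fin n → Fin n → ℝ)
    (c : Fin m → Fin m → ℝ) (d : Fin n → Fin n → ℝ) :
    (∑ στ : (Fin m → Fin m) × (Fin n → Fin n), f2 q c d στ.1 στ.2) /
        ((m : ℝ) ^ m * (n : ℝ) ^ n) =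
      (1 / ((m : ℝ) * n)) * (∑ i, ∑ j, ∑ k, ∑ l, q i j k l)
        + (1 / (m : ℝ)) * (∑ i, ∑ j, c i j)
        + (1 / (n : ℝ)) * (∑ i, ∑ j, d i j) := by
  have key : (∑ στ : (Fin m → Fin m) × (Fin n → Fin n), f2 q c d στ.1 στ.2)
      = (m^(m-1) * n^(n-1)) • (∑ i, ∑ j, ∑ k, ∑ l, q i j k l)
        + (n^n * m^(m-1)) • (∑ i, ∑ j, c i j)
        + (m^m * n^(n-1)) • (∑ i, ∑ j, d i j) := by
    rw [Fintype.sum_prod_type]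
    simp only [f2, Finset.sum_add_distrib]
    congr 1
    congr 1
    · -- q term
      have h1 : ∀ σ : Fin m → Fin m,
          (∑ τ : Fin n → Fin n, ∑ i, ∑ l, q i (σ i) (τ l) l)
          = n^(n-1) • ∑ l, ∑ k, ∑ i, q i (σ i) k l := by
        intro σ
        have e1 : ∀ τ : Fin n → Fin n,
            (∑ i, ∑ l, q i (σ i) (τ l) l) = ∑ l, ∑ i, q i (σ i) (τ l) l :=
          fun τ => Finset.sum_comm
        rw [Finset.sum_congr rfl fun τ _ => e1 τ]
        simpa using sum_sum_eval (fun l k => ∑ i, q i (σ i) k l)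
      rw [Finset.sum_congr rfl fun σ _ => h1 σ, ← Finset.smul_sum]
      have e2 : ∀ σ : Fin m → Fin m,
          (∑ l, ∑ k, ∑ i, q i (σ i) k l) = ∑ i, ∑ l, ∑ k, q i (σ i) k l := by
        intro σ
        calc (∑ l, ∑ k, ∑ i, q i (σ i) k l)
            = ∑ l, ∑ i, ∑ k, q i (σ i) k l :=
              Finset.sum_congr rfl fun l _ => Finset.sum_comm
          _ = ∑ i, ∑ l, ∑ k, q i (σ i) k l := Finset.sum_comm
      rw [Finset.sum_congr rfl fun σ _ => e2 σ,
        sum_sum_eval (fun i j => ∑ l, ∑ k, q i j k l)]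
      have e5 : (∑ i, ∑ j, ∑ l, ∑ k, q i j k l) = ∑ i, ∑ j, ∑ k, ∑ l, q i j k l :=
        Finset.sum_congr rfl fun i _ => Finset.sum_congr rfl fun j _ => Finset.sum_comm
      simp only [Fintype.card_fin, e5, ← mul_smul]
      ring_nf
    · -- c term
      have e3 : ∀ σ : Fin m → Fin m,
          (∑ τ : Fin n → Fin n, ∑ i, c i (σ i)) = n^n • ∑ i, c i (σ i) := by
        intro σ; simp [Finset.sum_const, Fintype.card_fun]
      rw [Finset.sum_congr rfl fun σ _ => e3 σ, ← Finset.smul_sum]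
      rw [sum_sum_eval c]
      simp [Fintype.card_fin, mul_smul]
    · -- d term
      have e4 : (∑ τ : Fin n → Fin n, ∑ l, d (τ l) l)
          = n^(n-1) • ∑ k, ∑ l, d k l := by
        rw [sum_sum_eval (fun l k => d k l)]
        simp only [Fintype.card_fin]
        congr 1
        exact Finset.sum_comm
      simp [e4, Finset.sum_const, Fintype.card_fun, mul_smul]
  rw [key]
  have hm' : (m:ℝ) ≠ 0 := Nat.cast_ne_zero.mpr hm.ne'
  have hn' : (n:ℝ) ≠ 0 := Nat.cast_ne_zero.mpr hn.ne'
  have hmm : (m:ℝ)^m = m * (m:ℝ)^(m-1) := by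
    rw [← pow_succ', Nat.sub_add_cancel hm]
  have hnn : (n:ℝ)^n = n * (n:ℝ)^(n-1) := by
    rw [← pow_succ', Nat.sub_add_cancel hn]
  simp only [nsmul_eq_mul, Nat.cast_mul, Nat.cast_pow]
  rw [hmm, hnn]
  have h1 : (m:ℝ)^(m-1) ≠ 0 := pow_ne_zero _ hm'
  have h2 : (n:ℝ)^(n-1) ≠ 0 := pow_ne_zero _ hn'
  field_simp
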